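/- For each real m ≥ 0 and reals x, t with |x| < t: lim_{n→∞} n·a1( (2/n)·⌊nx/2⌋, (2/n)·⌊nt/2⌋, m, 1/n ) = m·J0(m·√(t²−x²)) and lim_{n→∞} n·a2( (2/n)·⌊nx/2⌋, (2/n)·⌊nt/2⌋, m, 1/n ) = −m·((x+t)/√(t²−x²))·J1(m·√(t²−x²)), where J0 and J1 are the Bessel functions of the first kind. -/

import Mathlib

open scoped BigOperators

noncomputable section

/-- Endpoint `x`-coordinate of a checker path of `n` steps encoded by step directions:
`true` = step `(1,1)`, `false` = step `(-1,1)`. -/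
def endpt {n : ℕ} (d : Fin n → Bool) : ℤ :=
  ∑ i, (if d i then (1 : ℤ) else -1)

/-- The number of turns of a checker path encoded by step directions. -/
def turns {n : ℕ} (d : Fin n → Bool) : ℕ :=
  ((Finset.range n).filter fun i =>
    ∃ h : i + 1 < n, d ⟨i, Nat.lt_of_succ_lt h⟩ ≠ d ⟨i + 1, h⟩).card

/-- Checker paths from `(0,0)` to `(x,n)` with the first step to `(1,1)`,
encoded by their step directions. -/
def pathsTo (x : ℤ) (n : ℕ) : Finset (Fin n → Bool) :=
  Finset.univ.filter fun d => (∃ h : 0 < n, d ⟨0, h⟩ = true) ∧ endpt d = x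


section Aux

lemma endpt_snoc {n : ℕ} (e : Fin n → Bool) (b : Bool) :
    endpt (Fin.snoc e b) = endpt e + (if b then 1 else -1) := by
  unfold endpt
  rw [Fin.sum_univ_castSucc]
  simp

lemma turns_snoc {n : ℕ} (e : Fin (n+1) → Bool) (b : Bool) :
    turns (Fin.snoc e b) = turns e + (if e (Fin.last n) = b then 0 else 1) := by
  have hlast : (Fin.snoc e b : Fin (n+2) → Bool) ⟨n+1, by omega⟩ = b := by
    have : (⟨n+1, by omega⟩ : Fin (n+2)) = Fin.last (n+1) := rfl
    rw [this, Fin.snoc_last]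
  have hcast : ∀ (i : ℕ) (h : i < n+1),
      (Fin.snoc e b : Fin (n+2) → Bool) ⟨i, by omega⟩ = e ⟨i, h⟩ := by
    intro i h
    have : (⟨i, by omega⟩ : Fin (n+2)) = Fin.castSucc ⟨i, h⟩ := rfl
    rw [this, Fin.snoc_castSucc]
  unfold turns
  rw [Finset.card_filter, Finset.card_filter, Finset.sum_range_succ (n := n+1),
    Finset.sum_range_succ (n := n), Finset.sum_range_succ (n := n)]
  have h1 : (if (∃ h : (n+1) + 1 < n+2, (Fin.snoc e b : Fin (n+2) → Bool) ⟨n+1, Nat.lt_of_succ_lt h⟩ ≠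
      (Fin.snoc e b : Fin (n+2) → Bool) ⟨n+2, h⟩) then 1 else 0) = 0 := by
    simp only [ite_eq_right_iff]
    intro ⟨h, _⟩; omega
  have h2 : (if (∃ h : n + 1 < n+1, e ⟨n, Nat.lt_of_succ_lt h⟩ ≠ e ⟨n+1, h⟩) then 1 else 0) = 0 := by
    simp only [ite_eq_right_iff]
    intro ⟨h, _⟩; omega
  have h3 : (if (∃ h : n + 1 < n+2, (Fin.snoc e b : Fin (n+2) → Bool) ⟨n, Nat.lt_of_succ_lt h⟩ ≠
      (Fin.snoc e b : Fin (n+2) → Bool) ⟨n+1, h⟩) then 1 else 0)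
      = (if e (Fin.last n) = b then 0 else 1) := by
    have hiff : (∃ h : n + 1 < n+2, (Fin.snoc e b : Fin (n+2) → Bool) ⟨n, Nat.lt_of_succ_lt h⟩ ≠
        (Fin.snoc e b : Fin (n+2) → Bool) ⟨n+1, h⟩) ↔ e (Fin.last n) ≠ b := by
      constructor
      · rintro ⟨h, hne⟩
        rwa [hcast n (by omega), hlast, show (⟨n, by omega⟩ : Fin (n+1)) = Fin.last n from rfl] at hne
      · intro hne
        refine ⟨by omega, ?_⟩
        rwa [hcast n (by omega), hlast, show (⟨n, by omega⟩ : Fin (n+1)) = Fin.last n from rfl]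
    rw [if_congr hiff rfl rfl]
    by_cases hb : e (Fin.last n) = b
    · rw [if_neg (by simp [hb]), if_pos hb]
    · rw [if_pos hb, if_neg hb]
  have h4 : ∀ i ∈ Finset.range n, (if (∃ h : i + 1 < n+2,
      (Fin.snoc e b : Fin (n+2) → Bool) ⟨i, Nat.lt_of_succ_lt h⟩ ≠
      (Fin.snoc e b : Fin (n+2) → Bool) ⟨i+1, h⟩) then (1:ℕ) else 0)
      = (if (∃ h : i + 1 < n+1, e ⟨i, Nat.lt_of_succ_lt h⟩ ≠ e ⟨i+1, h⟩) then 1 else 0) := by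
    intro i hi
    simp only [Finset.mem_range] at hi
    apply if_congr _ rfl rfl
    constructor
    · rintro ⟨h, hne⟩
      refine ⟨by omega, ?_⟩
      rwa [hcast i (by omega), hcast (i+1) (by omega)] at hne
    · rintro ⟨h, hne⟩
      refine ⟨by omega, ?_⟩
      rwa [hcast i (by omega), hcast (i+1) (by omega)]
  rw [Finset.sum_congr rfl h4, h1, h2, h3]
  ring

/-- Path sum over paths of length `n+1` ending at `x` whose last step is `b`. -/
def S (z : ℂ) (n : ℕ) (x : ℤ) (b : Bool) : ℂ :=
  ∑ d ∈ (pathsTo x (n+1)).filter (fun d => d (Fin.last n) = b), z ^ turns d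

lemma S_eq_sum (z : ℂ) (n : ℕ) (x : ℤ) (b : Bool) :
    S z n x b = ∑ d : Fin (n+1) → Bool,
      (if d ⟨0, Nat.succ_pos n⟩ = true ∧ endpt d = x ∧ d (Fin.last n) = b
        then z ^ turns d else 0) := by
  unfold S pathsTo
  rw [Finset.filter_filter, Finset.sum_filter]
  apply Finset.sum_congr rfl
  intro d _
  congr 1
  simp only [eq_iff_iff]
  constructor
  · rintro ⟨⟨⟨h, h0⟩, hx⟩, hb⟩
    exact ⟨h0, hx, hb⟩
  · rintro ⟨h0, hx, hb⟩
    exact ⟨⟨⟨Nat.succ_pos n, h0⟩, hx⟩, hb⟩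

lemma sum_pathsTo_split (z : ℂ) (n : ℕ) (x : ℤ) :
    ∑ d ∈ pathsTo x (n+1), z ^ turns d = S z n x true + S z n x false := by
  unfold S
  rw [← Finset.sum_filter_add_sum_filter_not (pathsTo x (n+1)) (fun d => d (Fin.last n) = true)]
  congr 1
  apply Finset.sum_congr _ (fun _ _ => rfl)
  apply Finset.filter_congr
  intro d _
  simp

lemma S_zero (z : ℂ) (x : ℤ) (b : Bool) :
    S z 0 x b = if x = 1 ∧ b = true then 1 else 0 := by
  rw [S_eq_sum]
  rw [Fintype.sum_eq_add_sum_compl (fun _ : Fin 1 => true)]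
  have h1 : ∀ d : Fin 1 → Bool, endpt d = if d 0 then 1 else -1 := by
    intro d
    unfold endpt
    rw [Finset.sum_eq_single (0 : Fin 1)] <;> simp [Fin.eq_zero]
  have h2 : ∀ d : Fin 1 → Bool, turns d = 0 := by
    intro d
    unfold turns
    rw [Finset.card_eq_zero, Finset.filter_eq_empty_iff]
    rintro i hi ⟨h, _⟩
    simp only [Finset.mem_range] at hi
    omega
  have h3 : ∑ d ∈ ({fun _ : Fin 1 => true} : Finset (Fin 1 → Bool))ᶜ,
      (if d ⟨0, Nat.succ_pos 0⟩ = true ∧ endpt d = x ∧ d (Fin.last 0) = b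
        then z ^ turns d else 0) = 0 := by
    apply Finset.sum_eq_zero
    intro d hd
    rw [if_neg]
    rintro ⟨h0, -, -⟩
    simp only [Finset.mem_compl, Finset.mem_singleton] at hd
    apply hd
    funext i
    rw [Fin.eq_zero i]
    exact h0
  rw [h3, add_zero, h2, pow_zero, h1]
  have hl : (Fin.last 0) = (0 : Fin 1) := rfl
  simp only [hl]
  by_cases hx : x = 1 ∧ b = true
  · rw [if_pos hx, if_pos (by simp [hx.1, hx.2])]
  · rw [if_neg hx, if_neg]
    rintro ⟨-, h1', h2'⟩
    exact hx ⟨by simpa using h1'.symm, by simpa using h2'⟩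

lemma S_succ (z : ℂ) (n : ℕ) (x : ℤ) (b : Bool) :
    S z (n+1) x b = S z n (x - (if b then 1 else -1)) b
      + z * S z n (x - (if b then 1 else -1)) (!b) := by
  have hsnoc0 : ∀ (e : Fin (n+1) → Bool) (b' : Bool),
      (Fin.snoc e b' : Fin (n+2) → Bool) ⟨0, Nat.succ_pos (n+1)⟩ = e ⟨0, Nat.succ_pos n⟩ := by
    intro e b'
    have h : (⟨0, Nat.succ_pos (n+1)⟩ : Fin (n+2)) = Fin.castSucc ⟨0, Nat.succ_pos n⟩ := rfl
    rw [h, Fin.snoc_castSucc]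
  rw [S_eq_sum]
  rw [show (∑ d : Fin (n+2) → Bool,
      (if d ⟨0, Nat.succ_pos (n+1)⟩ = true ∧ endpt d = x ∧ d (Fin.last (n+1)) = b
        then z ^ turns d else 0))
    = ∑ p : Bool × (Fin (n+1) → Bool),
      (if (Fin.snoc p.2 p.1 : Fin (n+2) → Bool) ⟨0, Nat.succ_pos (n+1)⟩ = true
          ∧ endpt (Fin.snoc p.2 p.1 : Fin (n+2) → Bool) = x
          ∧ (Fin.snoc p.2 p.1 : Fin (n+2) → Bool) (Fin.last (n+1)) = b
        then z ^ turns (Fin.snoc p.2 p.1 : Fin (n+2) → Bool) else 0)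
    from (Fintype.sum_equiv (Fin.snocEquiv (fun _ => Bool)) _ _ (fun p => by
      simp only [Fin.snocEquiv_apply]
      rfl)).symm]
  rw [Fintype.sum_prod_type]
  rw [Fintype.sum_bool]
  -- the b' ≠ b summand vanishes
  have hvanish : ∀ b' : Bool, b' ≠ b → (∑ e : Fin (n+1) → Bool,
      (if (Fin.snoc e b' : Fin (n+2) → Bool) ⟨0, Nat.succ_pos (n+1)⟩ = true
          ∧ endpt (Fin.snoc e b' : Fin (n+2) → Bool) = x
          ∧ (Fin.snoc e b' : Fin (n+2) → Bool) (Fin.last (n+1)) = b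
        then z ^ turns (Fin.snoc e b' : Fin (n+2) → Bool) else 0)) = 0 := by
    intro b' hb'
    apply Finset.sum_eq_zero
    intro e _
    rw [if_neg]
    rintro ⟨-, -, hlast⟩
    rw [Fin.snoc_last] at hlast
    exact hb' hlast
  have hmain : (∑ e : Fin (n+1) → Bool,
      (if (Fin.snoc e b : Fin (n+2) → Bool) ⟨0, Nat.succ_pos (n+1)⟩ = true
          ∧ endpt (Fin.snoc e b : Fin (n+2) → Bool) = x
          ∧ (Fin.snoc e b : Fin (n+2) → Bool) (Fin.last (n+1)) = b
        then z ^ turns (Fin.snoc e b : Fin (n+2) → Bool) else 0))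
      = S z n (x - (if b then 1 else -1)) b
        + z * S z n (x - (if b then 1 else -1)) (!b) := by
    rw [S_eq_sum, S_eq_sum, Finset.mul_sum, ← Finset.sum_add_distrib]
    apply Finset.sum_congr rfl
    intro e _
    rw [hsnoc0, endpt_snoc, Fin.snoc_last, turns_snoc]
    by_cases h0 : e ⟨0, Nat.succ_pos n⟩ = true
    · by_cases hx : endpt e = x - (if b then 1 else -1)
      · have hx' : endpt e + (if b then 1 else -1) = x := by omega
        rw [if_pos ⟨h0, hx', rfl⟩]
        by_cases hl : e (Fin.last n) = b
        · rw [if_pos hl, if_pos ⟨h0, hx, hl⟩, if_neg, pow_add, pow_zero, mul_one, mul_zero,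
            add_zero]
          rintro ⟨-, -, hlb⟩
          rw [hl] at hlb
          exact (Bool.eq_not_self b).mp hlb
        · rw [if_neg hl, if_neg, if_pos ⟨h0, hx, by cases b <;> simp_all⟩, pow_add, pow_one,
            zero_add]
          · ring
          · rintro ⟨-, -, hlb⟩
            exact hl hlb
      · rw [if_neg, if_neg, if_neg, mul_zero, add_zero]
        · rintro ⟨-, hx', -⟩; exact hx (by omega)
        · rintro ⟨-, hx', -⟩; exact hx hx'
        · rintro ⟨-, hx', -⟩; exact hx (by omega)
    · rw [if_neg, if_neg, if_neg, mul_zero, add_zero]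
      · rintro ⟨h0', -⟩; exact h0 h0'
      · rintro ⟨h0', -⟩; exact h0 h0'
      · rintro ⟨h0', -⟩; exact h0 h0'
  cases b
  · rw [hvanish true (by simp), zero_add, hmain]
  · rw [hvanish false (by simp), add_zero, hmain]

/-- Number of compositions of `M` into `j` positive parts. -/
def cc : ℕ → ℕ → ℕ
  | 0, 0 => 1
  | 0, _+1 => 0
  | _+1, 0 => 0
  | M+1, j+1 => Nat.choose M j

@[simp] lemma cc_zero_zero : cc 0 0 = 1 := rfl
@[simp] lemma cc_zero_succ (j : ℕ) : cc 0 (j+1) = 0 := rfl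
@[simp] lemma cc_succ_zero (M : ℕ) : cc (M+1) 0 = 0 := rfl
@[simp] lemma cc_succ_succ (M j : ℕ) : cc (M+1) (j+1) = Nat.choose M j := rfl

lemma cc_eq_zero {M j : ℕ} (h : M < j) : cc M j = 0 := by
  match M, j with
  | 0, j+1 => rfl
  | M+1, j+1 => exact Nat.choose_eq_zero_of_lt (by omega)

lemma cc_pascal (M j : ℕ) : cc (M+1) (j+1) = cc M (j+1) + cc M j := by
  match M, j with
  | 0, 0 => rfl
  | 0, j+1 => simp [Nat.choose_eq_zero_of_lt]
  | M+1, 0 => simp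
  | M+1, j+1 => simp [Nat.choose_succ_succ]; omega

lemma cc_sum (Q k : ℕ) : cc Q k + cc Q (k+1) = Nat.choose Q k := by
  match Q, k with
  | 0, 0 => rfl
  | 0, k+1 => simp [Nat.choose_eq_zero_of_lt]
  | Q+1, 0 => simp
  | Q+1, k+1 => simp [Nat.choose_succ_succ]

/-- Closed form for `S · true`. -/
def FF (z : ℂ) (P Q : ℕ) : ℂ :=
  ∑ k ∈ Finset.range (Q+1), z^(2*k) * (cc P (k+1) : ℂ) * (cc Q k : ℂ)

/-- Closed form for `S · false`. -/
def GG (z : ℂ) (P Q : ℕ) : ℂ :=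
  ∑ k ∈ Finset.range (Q+1), z^(2*k+1) * (cc P (k+1) : ℂ) * (cc Q (k+1) : ℂ)

lemma FF_ext (z : ℂ) (P Q N : ℕ) (h : Q ≤ N) :
    FF z P Q = ∑ k ∈ Finset.range (N+1), z^(2*k) * (cc P (k+1) : ℂ) * (cc Q k : ℂ) := by
  apply Finset.sum_subset
  · exact Finset.range_subset_range.2 (by omega)
  · intro k _ hk
    simp only [Finset.mem_range, not_lt] at hk
    rw [cc_eq_zero (show Q < k by omega)]
    simp

lemma GG_ext (z : ℂ) (P Q N : ℕ) (h : Q ≤ N) :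
    GG z P Q = ∑ k ∈ Finset.range (N+1), z^(2*k+1) * (cc P (k+1) : ℂ) * (cc Q (k+1) : ℂ) := by
  apply Finset.sum_subset
  · exact Finset.range_subset_range.2 (by omega)
  · intro k _ hk
    simp only [Finset.mem_range, not_lt] at hk
    rw [cc_eq_zero (show Q < k + 1 by omega)]
    simp

@[simp] lemma FF_zero_left (z : ℂ) (Q : ℕ) : FF z 0 Q = 0 := by
  unfold FF
  apply Finset.sum_eq_zero
  intro k _
  simp

@[simp] lemma GG_zero_left (z : ℂ) (Q : ℕ) : GG z 0 Q = 0 := by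
  unfold GG
  apply Finset.sum_eq_zero
  intro k _
  simp

@[simp] lemma GG_zero_right (z : ℂ) (P : ℕ) : GG z P 0 = 0 := by
  unfold GG
  apply Finset.sum_eq_zero
  intro k _
  simp

lemma FF_rec (z : ℂ) (P Q : ℕ) (h : 1 ≤ P + Q) :
    FF z (P+1) Q = FF z P Q + z * GG z P Q := by
  rw [FF_ext z (P+1) Q (Q+1) (by omega), FF_ext z P Q (Q+1) (by omega),
    GG_ext z P Q (Q+1) (by omega), Finset.mul_sum]
  have hshift : ∑ k ∈ Finset.range (Q+2), z * (z^(2*k+1) * (cc P (k+1) : ℂ) * (cc Q (k+1) : ℂ))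
      = ∑ k ∈ Finset.range (Q+2), z^(2*(k+1)) * (cc P (k+1) : ℂ) * (cc Q (k+1) : ℂ) := by
    apply Finset.sum_congr rfl
    intro k _
    ring_nf
  rw [hshift]
  have hsum : ∑ k ∈ Finset.range (Q+2), z^(2*(k+1)) * (cc P (k+1) : ℂ) * (cc Q (k+1) : ℂ)
      = ∑ k ∈ Finset.range (Q+3), z^(2*k) * (cc P k : ℂ) * (cc Q k : ℂ) := by
    rw [Finset.sum_range_succ' (fun k => z^(2*k) * (cc P k : ℂ) * (cc Q k : ℂ)) (Q+2)]
    have h0 : z^(2*0) * (cc P 0 : ℂ) * (cc Q 0 : ℂ) = 0 := by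
      match P, Q with
      | 0, 0 => omega
      | P+1, _ => simp
      | 0, Q+1 => simp
    rw [h0, add_zero]
  rw [hsum]
  have hextra : ∑ k ∈ Finset.range (Q+3), z^(2*k) * (cc P k : ℂ) * (cc Q k : ℂ)
      = ∑ k ∈ Finset.range (Q+2), z^(2*k) * (cc P k : ℂ) * (cc Q k : ℂ) := by
    rw [Finset.sum_range_succ, cc_eq_zero (show Q < Q + 2 by omega)]
    simp
  rw [hextra, ← Finset.sum_add_distrib]
  apply Finset.sum_congr rfl
  intro k _
  rw [cc_pascal]
  push_cast
  ring

lemma GG_rec (z : ℂ) (P Q : ℕ) :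
    GG z P (Q+1) = z * FF z P Q + GG z P Q := by
  rw [GG_ext z P (Q+1) (Q+1) (le_refl _), FF_ext z P Q (Q+1) (by omega),
    GG_ext z P Q (Q+1) (by omega), Finset.mul_sum, ← Finset.sum_add_distrib]
  apply Finset.sum_congr rfl
  intro k _
  have h1 : (cc (Q+1) (k+1) : ℂ) = (cc Q k : ℂ) + (cc Q (k+1) : ℂ) := by
    rw [cc_succ_succ, ← cc_sum Q k]
    push_cast
    ring
  rw [h1]
  ring

lemma endpt_rep {n : ℕ} (d : Fin n → Bool) :
    ∃ P Q : ℕ, P + Q = n ∧ (P:ℤ) - Q = endpt d := by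
  classical
  set P := (Finset.univ.filter (fun i => d i = true)).card with hP
  have hPle : P ≤ n := by
    calc P ≤ Finset.univ.card := Finset.card_filter_le _ _
    _ = n := by simp
  refine ⟨P, n - P, by omega, ?_⟩
  unfold endpt
  rw [Finset.sum_ite (f := fun _ => (1:ℤ)) (g := fun _ => (-1:ℤ))]
  simp only [Finset.sum_const, smul_eq_mul, nsmul_eq_mul, mul_one, mul_neg]
  have hcard2 : (Finset.univ.filter (fun i => ¬ d i = true)).card = n - P := by
    have := Finset.card_filter_add_card_filter_not
      (s := (Finset.univ : Finset (Fin n))) (p := fun i => d i = true)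
    simp only [Finset.card_univ, Fintype.card_fin] at this
    omega
  rw [hcard2]
  omega

lemma S_vanish (z : ℂ) (n : ℕ) (x : ℤ) (b : Bool)
    (h : ∀ P Q : ℕ, P + Q = n + 1 → (P:ℤ) - Q ≠ x) : S z n x b = 0 := by
  have he : (pathsTo x (n+1)).filter (fun d => d (Fin.last n) = b) = ∅ := by
    apply Finset.eq_empty_of_forall_notMem
    intro d hd
    rw [Finset.mem_filter] at hd
    unfold pathsTo at hd
    rw [Finset.mem_filter] at hd
    obtain ⟨⟨-, -, hx⟩, -⟩ := hd
    obtain ⟨P, Q, hPQ, hrep⟩ := endpt_rep d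
    exact h P Q hPQ (hrep.trans hx)
  unfold S
  rw [he, Finset.sum_empty]

theorem S_closed (z : ℂ) : ∀ (n P Q : ℕ), P + Q = n + 1 →
    S z n ((P:ℤ) - Q) true = FF z P Q ∧ S z n ((P:ℤ) - Q) false = GG z P Q := by
  intro n
  induction n with
  | zero =>
    intro P Q hPQ
    match P, Q, hPQ with
    | P+2, Q, h => omega
    | 1, Q+1, h => omega
    | 1, 0, _ =>
      rw [S_zero, S_zero]
      constructor
      · rw [if_pos ⟨by norm_num, rfl⟩]
        unfold FF
        simp [cc]
      · rw [if_neg (by simp)]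
        simp
    | 0, Q+2, h => omega
    | 0, 0, h => omega
    | 0, 1, _ =>
      rw [S_zero, S_zero]
      constructor
      · rw [if_neg (by norm_num)]
        simp
      · rw [if_neg (by norm_num)]
        simp
  | succ n ih =>
    intro P Q hPQ
    constructor
    · rw [S_succ, if_pos rfl]
      simp only [Bool.not_true]
      by_cases hP : P = 0
      · subst hP
        have hv : ∀ b, S z n (((0:ℕ):ℤ) - (Q:ℤ) - 1) b = 0 := by
          intro b
          apply S_vanish
          intro A B hAB
          omega
        rw [hv, hv]
        simp
      · obtain ⟨P, rfl⟩ : ∃ P', P = P' + 1 := ⟨P-1, by omega⟩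
        have hx : ((P+1:ℕ):ℤ) - (Q:ℤ) - 1 = (P:ℤ) - Q := by push_cast; ring
        rw [hx, (ih P Q (by omega)).1, (ih P Q (by omega)).2, FF_rec z P Q (by omega)]
    · rw [S_succ, if_neg (by simp)]
      simp only [Bool.not_false]
      by_cases hQ : Q = 0
      · subst hQ
        have hv : ∀ b, S z n ((P:ℤ) - ((0:ℕ):ℤ) - (-1)) b = 0 := by
          intro b
          apply S_vanish
          intro A B hAB
          omega
        rw [hv, hv]
        simp
      · obtain ⟨Q, rfl⟩ : ∃ Q', Q = Q' + 1 := ⟨Q-1, by omega⟩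
        have hx : (P:ℤ) - ((Q+1:ℕ):ℤ) - (-1) = (P:ℤ) - Q := by push_cast; ring
        rw [hx, (ih P Q (by omega)).1, (ih P Q (by omega)).2, GG_rec z P Q]
        ring

theorem sum_pathsTo_closed (z : ℂ) (n P Q : ℕ) (h : P + Q = n + 1) :
    ∑ d ∈ pathsTo ((P:ℤ) - Q) (n+1), z ^ turns d = FF z P Q + GG z P Q := by
  rw [sum_pathsTo_split, (S_closed z n P Q h).1, (S_closed z n P Q h).2]

open Filter

lemma choose_div_pow_tendsto {M : ℕ → ℕ} {c : ℝ} (hc : 0 < c)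
    (h : Tendsto (fun n => (M n : ℝ) / n) atTop (nhds c)) (k : ℕ) :
    Tendsto (fun n => (Nat.choose (M n) k : ℝ) / (n:ℝ)^k) atTop
      (nhds (c^k / (Nat.factorial k : ℝ))) := by
  have hM : ∀ K : ℕ, ∀ᶠ n in atTop, K ≤ M n := by
    intro K
    have h1 : ∀ᶠ n in atTop, c/2 < (M n : ℝ)/n := h.eventually (eventually_gt_nhds (by linarith))
    have h2 : ∀ᶠ n : ℕ in atTop, (2*K/c : ℝ) ≤ n := by
      have := tendsto_natCast_atTop_atTop (R := ℝ)
      exact this.eventually_ge_atTop _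
    filter_upwards [h1, h2, eventually_ge_atTop 1] with n hn1 hn2 hn3
    have hn : (0:ℝ) < n := by positivity
    have : (K : ℝ) ≤ (M n : ℝ) := by
      have h3 : (c/2) * n < (M n : ℝ) := (lt_div_iff₀ hn).mp hn1
      have h4 : 2 * (K:ℝ) ≤ (n:ℝ) * c := (div_le_iff₀ hc).mp hn2
      nlinarith
    exact_mod_cast this
  have hcast : ∀ N : ℕ, k ≤ N → (Nat.choose N k : ℝ)
      = (∏ i ∈ Finset.range k, ((N:ℝ) - i)) / (Nat.factorial k : ℝ) := by
    intro N hkN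
    have h1 : (Nat.descFactorial N k : ℝ) = ∏ i ∈ Finset.range k, ((N:ℝ) - i) := by
      rw [Nat.descFactorial_eq_prod_range, Nat.cast_prod]
      apply Finset.prod_congr rfl
      intro i hi
      simp only [Finset.mem_range] at hi
      rw [Nat.cast_sub (by omega)]
    have h2 : (Nat.descFactorial N k : ℝ) = (Nat.factorial k : ℝ) * (Nat.choose N k : ℝ) := by
      rw [← Nat.cast_mul, Nat.descFactorial_eq_factorial_mul_choose]
    rw [h2] at h1
    field_simp at h1 ⊢
    linarith [h1]
  have hfact : (0:ℝ) < (Nat.factorial k : ℝ) := by positivity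
  have hlim : Tendsto (fun n => (∏ i ∈ Finset.range k, ((M n : ℝ)/n - i/n))
      / (Nat.factorial k : ℝ)) atTop (nhds (c^k / (Nat.factorial k : ℝ))) := by
    apply Tendsto.div_const
    have : Tendsto (fun n => ∏ i ∈ Finset.range k, ((M n : ℝ)/n - i/n)) atTop
        (nhds (∏ _i ∈ Finset.range k, c)) := by
      apply tendsto_finset_prod
      intro i _
      have hz : Tendsto (fun n : ℕ => (i:ℝ)/n) atTop (nhds 0) :=
        Tendsto.div_atTop tendsto_const_nhds tendsto_natCast_atTop_atTop
      simpa using h.sub hz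
    simpa using this
  apply hlim.congr'
  filter_upwards [hM k, eventually_ge_atTop 1] with n hn1 hn2
  have hn : (0:ℝ) < n := by positivity
  rw [hcast (M n) hn1]
  have hstep : ∀ i ∈ Finset.range k, (M n:ℝ)/n - (i:ℝ)/n = ((M n:ℝ) - i)/(n:ℝ) := by
    intro i _
    ring
  rw [Finset.prod_congr rfl hstep, Finset.prod_div_distrib, Finset.prod_const,
    Finset.card_range]
  ring

/-- Real sum giving the imaginary part structure. -/
def RA (m ε : ℝ) (P Q : ℕ) : ℝ :=
  ∑ k ∈ Finset.range (Q+1), (-((m*ε)^2))^k * (cc P (k+1) : ℝ) * (cc Q k : ℝ)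

/-- Real sum giving the real part structure. -/
def RB (m ε : ℝ) (P Q : ℕ) : ℝ :=
  ∑ k ∈ Finset.range (Q+1), (m*ε) * (-((m*ε)^2))^k * (cc P (k+1) : ℝ) * (cc Q (k+1) : ℝ)

end Aux

/-- Feynman checkers with mass `m` and lattice step `ε`: the value `a(εx, εt, m, ε)`,
where `x t : ℤ` are the coordinates in units of `ε`. -/
def am (x t : ℤ) (m ε : ℝ) : ℂ :=
  (1 + m ^ 2 * ε ^ 2 : ℂ) ^ ((1 - (t : ℂ)) / 2) * Complex.I *
    ∑ d ∈ pathsTo x t.toNat, (-Complex.I * (m * ε)) ^ turns d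

/-- The basic model: `a(x,t)`. -/
def a (x t : ℤ) : ℂ :=
  (2 : ℂ) ^ ((1 - (t : ℂ)) / 2) * Complex.I *
    ∑ d ∈ pathsTo x t.toNat, (-Complex.I) ^ turns d

/-- Bessel function of the first kind J₀. -/
def besselJ0 (z : ℝ) : ℝ := ∑' k : ℕ, (-1 : ℝ) ^ k * (z / 2) ^ (2 * k) / (Nat.factorial k : ℝ) ^ 2

/-- Bessel function of the first kind J₁. -/
def besselJ1 (z : ℝ) : ℝ :=
  ∑' k : ℕ, (-1 : ℝ) ^ k * (z / 2) ^ (2 * k + 1) /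
    ((Nat.factorial k : ℝ) * (Nat.factorial (k + 1) : ℝ))


open Filter in
lemma floor_mul_div_tendsto (c : ℝ) :
    Tendsto (fun n : ℕ => ((⌊(n:ℝ) * c / 2⌋ : ℤ) : ℝ) / n) atTop (nhds (c/2)) := by
  have h0 : Tendsto (fun n : ℕ => 1/(n:ℝ)) atTop (nhds 0) :=
    tendsto_one_div_atTop_nhds_zero_nat
  have hlow : Tendsto (fun n : ℕ => c/2 - 1/(n:ℝ)) atTop (nhds (c/2)) := by
    simpa using tendsto_const_nhds.sub h0
  apply tendsto_of_tendsto_of_tendsto_of_le_of_le' hlow tendsto_const_nhds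
  · filter_upwards [eventually_ge_atTop 1] with n hn
    have hn' : (0:ℝ) < n := by positivity
    rw [le_div_iff₀ hn']
    have h1 : (n:ℝ)*c/2 - 1 < ((⌊(n:ℝ)*c/2⌋ : ℤ) : ℝ) := Int.sub_one_lt_floor _
    have h2 : (c/2 - 1/(n:ℝ)) * n = (n:ℝ)*c/2 - 1 := by field_simp
    linarith
  · filter_upwards [eventually_ge_atTop 1] with n hn
    have hn' : (0:ℝ) < n := by positivity
    rw [div_le_iff₀ hn']
    have h2 : ((⌊(n:ℝ)*c/2⌋:ℤ):ℝ) ≤ (n:ℝ)*c/2 := Int.floor_le _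
    linarith

open Filter in
lemma pref_tendsto (m : ℝ) (A : ℕ → ℝ) (C : ℝ)
    (hA : ∀ᶠ n : ℕ in atTop, |A n| ≤ C * n) :
    Tendsto (fun n : ℕ => (1 + m^2*(1/(n:ℝ))^2) ^ (A n)) atTop (nhds 1) := by
  have hbase : ∀ n : ℕ, (0:ℝ) < 1 + m^2*(1/(n:ℝ))^2 := by intro n; positivity
  have h00 : Tendsto (fun n : ℕ => 1/(n:ℝ)) atTop (nhds 0) :=
    tendsto_one_div_atTop_nhds_zero_nat
  have h0 : Tendsto (fun n : ℕ => C * m^2 * (1/(n:ℝ))) atTop (nhds 0) := by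
    simpa using h00.const_mul (C * m^2)
  have hlog : Tendsto (fun n : ℕ => Real.log (1 + m^2*(1/(n:ℝ))^2) * A n) atTop (nhds 0) := by
    apply squeeze_zero_norm' _ h0
    filter_upwards [hA, eventually_ge_atTop 1] with n h1 h2
    have hn' : (0:ℝ) < n := by positivity
    have hlog1 : Real.log (1 + m^2*(1/(n:ℝ))^2) ≤ m^2*(1/(n:ℝ))^2 := by
      have := Real.log_le_sub_one_of_pos (hbase n)
      linarith
    have hlog0 : 0 ≤ Real.log (1 + m^2*(1/(n:ℝ))^2) :=
      Real.log_nonneg (le_add_of_nonneg_right (by positivity))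
    rw [Real.norm_eq_abs, abs_mul, abs_of_nonneg hlog0]
    calc Real.log (1 + m^2*(1/(n:ℝ))^2) * |A n| ≤ (m^2*(1/(n:ℝ))^2) * (C * n) := by
          apply mul_le_mul hlog1 h1 (abs_nonneg _) (by positivity)
      _ = C * m^2 * (1/(n:ℝ)) := by field_simp
  have hexp := (Real.continuous_exp.tendsto 0).comp hlog
  rw [Real.exp_zero] at hexp
  apply hexp.congr
  intro n
  rw [Real.rpow_def_of_pos (hbase n)]
  rfl

/-- Rescaled k-th term of the real-part sum. -/
noncomputable def fB0 (m : ℝ) (P Q : ℕ → ℕ) (n k : ℕ) : ℝ :=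
  (n:ℝ) * ((m*(1/(n:ℝ))) * (-((m*(1/(n:ℝ)))^2))^k * (cc (P n) (k+1) : ℝ) * (cc (Q n) (k+1) : ℝ))

/-- Rescaled k-th term of the imaginary-part sum. -/
noncomputable def fA0 (m : ℝ) (P Q : ℕ → ℕ) (n k : ℕ) : ℝ :=
  (n:ℝ) * ((-((m*(1/(n:ℝ)))^2))^k * (cc (P n) (k+1) : ℝ) * (cc (Q n) k : ℝ))

lemma fB0_eq {m : ℝ} {P Q : ℕ → ℕ} {n : ℕ} (hn : 1 ≤ n) (hP : 1 ≤ P n) (hQ : 1 ≤ Q n)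
    (k : ℕ) : fB0 m P Q n k = (-1)^k * m^(2*k+1) *
      ((Nat.choose (P n - 1) k : ℝ)/(n:ℝ)^k) * ((Nat.choose (Q n - 1) k : ℝ)/(n:ℝ)^k) := by
  unfold fB0
  rw [show P n = (P n - 1) + 1 by omega, show Q n = (Q n - 1) + 1 by omega,
    cc_succ_succ, cc_succ_succ, neg_pow]
  have hn' : ((n:ℝ)) ≠ 0 := Nat.cast_ne_zero.mpr (by omega)
  simp only [Nat.add_sub_cancel, one_div, mul_pow, inv_pow]
  field_simp
  ring

lemma fA0_eq {m : ℝ} {P Q : ℕ → ℕ} {n : ℕ} (hn : 1 ≤ n) (hP : 1 ≤ P n) (hQ : 1 ≤ Q n)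
    (j : ℕ) : fA0 m P Q n (j+1) = (-1)^(j+1) * m^(2*(j+1)) *
      ((Nat.choose (P n - 1) (j+1) : ℝ)/(n:ℝ)^(j+1)) * ((Nat.choose (Q n - 1) j : ℝ)/(n:ℝ)^j) := by
  unfold fA0
  rw [show P n = (P n - 1) + 1 by omega, show Q n = (Q n - 1) + 1 by omega,
    cc_succ_succ, cc_succ_succ, neg_pow]
  have hn' : ((n:ℝ)) ≠ 0 := Nat.cast_ne_zero.mpr (by omega)
  simp only [Nat.add_sub_cancel, one_div, mul_pow, inv_pow]
  field_simp
  ring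

lemma fA0_zero {m : ℝ} {P Q : ℕ → ℕ} {n : ℕ} (hQ : 1 ≤ Q n) : fA0 m P Q n 0 = 0 := by
  unfold fA0
  rw [show Q n = (Q n - 1) + 1 by omega, cc_succ_zero]
  simp

lemma choose_div_le {N n : ℕ} {w : ℝ} (hn : 1 ≤ n) (hN : (N:ℝ) ≤ n * w) (k : ℕ) :
    (Nat.choose N k : ℝ)/(n:ℝ)^k ≤ w^k / (Nat.factorial k : ℝ) := by
  have hn' : (0:ℝ) < n := by positivity
  have hw : 0 ≤ w := by nlinarith [Nat.cast_nonneg (α := ℝ) N]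
  have h1 : (Nat.choose N k : ℝ) ≤ (N:ℝ)^k / (Nat.factorial k : ℝ) :=
    Nat.choose_le_pow_div k N
  have h2 : ((N:ℝ))^k ≤ ((n:ℝ)*w)^k := pow_le_pow_left₀ (Nat.cast_nonneg N) hN k
  have hfact : (0:ℝ) < (Nat.factorial k : ℝ) := by positivity
  have h3 : (Nat.choose N k : ℝ) ≤ ((n:ℝ)*w)^k / (Nat.factorial k : ℝ) := by
    refine le_trans h1 ?_
    gcongr
  calc (Nat.choose N k : ℝ)/(n:ℝ)^k ≤ (((n:ℝ)*w)^k / (Nat.factorial k : ℝ))/(n:ℝ)^k := by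
        gcongr
    _ = w^k / (Nat.factorial k : ℝ) := by
        rw [mul_pow]
        field_simp

/-- Limit of the k-th real-part term. -/
noncomputable def gB0 (m u v : ℝ) (k : ℕ) : ℝ :=
  (-1)^k * m^(2*k+1) * (u^k / (Nat.factorial k : ℝ)) * (v^k / (Nat.factorial k : ℝ))

/-- Limit of the k-th imaginary-part term. -/
noncomputable def gA0 (m u v : ℝ) : ℕ → ℝ
  | 0 => 0
  | j+1 => (-1)^(j+1) * m^(2*(j+1)) *
      (u^(j+1) / (Nat.factorial (j+1) : ℝ)) * (v^j / (Nat.factorial j : ℝ))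

/-- Bound for the k-th imaginary-part term. -/
noncomputable def boundA0 (m u v : ℝ) : ℕ → ℝ
  | 0 => 0
  | j+1 => (m^2*u) * ((m^2*u*v)^j / (Nat.factorial j : ℝ))

open Filter in
lemma fB0_tendsto {m u v : ℝ} (hu : 0 < u) (hv : 0 < v) {P Q : ℕ → ℕ}
    (hP1 : ∀ᶠ n : ℕ in atTop, 1 ≤ P n) (hQ1 : ∀ᶠ n : ℕ in atTop, 1 ≤ Q n)
    (hPlim : Tendsto (fun n : ℕ => ((P n - 1 : ℕ) : ℝ)/n) atTop (nhds u))
    (hQlim : Tendsto (fun n : ℕ => ((Q n - 1 : ℕ) : ℝ)/n) atTop (nhds v)) (k : ℕ) :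
    Tendsto (fun n => fB0 m P Q n k) atTop (nhds (gB0 m u v k)) := by
  have hP := choose_div_pow_tendsto hu hPlim k
  have hQ := choose_div_pow_tendsto hv hQlim k
  have h2 := (hP.mul hQ).const_mul ((-1:ℝ)^k * m^(2*k+1))
  have heq : (fun n : ℕ => ((-1:ℝ)^k * m^(2*k+1)) *
      ((Nat.choose (P n - 1) k : ℝ)/(n:ℝ)^k * ((Nat.choose (Q n - 1) k : ℝ)/(n:ℝ)^k)))
      =ᶠ[atTop] (fun n => fB0 m P Q n k) := by
    filter_upwards [hP1, hQ1, eventually_ge_atTop 1] with n h1 h3 h4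
    rw [fB0_eq h4 h1 h3 k]
    ring
  have h5 := Filter.Tendsto.congr' heq h2
  convert h5 using 2
  unfold gB0
  ring

open Filter in
lemma fA0_tendsto {m u v : ℝ} (hu : 0 < u) (hv : 0 < v) {P Q : ℕ → ℕ}
    (hP1 : ∀ᶠ n : ℕ in atTop, 1 ≤ P n) (hQ1 : ∀ᶠ n : ℕ in atTop, 1 ≤ Q n)
    (hPlim : Tendsto (fun n : ℕ => ((P n - 1 : ℕ) : ℝ)/n) atTop (nhds u))
    (hQlim : Tendsto (fun n : ℕ => ((Q n - 1 : ℕ) : ℝ)/n) atTop (nhds v)) (k : ℕ) :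
    Tendsto (fun n => fA0 m P Q n k) atTop (nhds (gA0 m u v k)) := by
  match k with
  | 0 =>
    apply Filter.Tendsto.congr' ?_ (tendsto_const_nhds (x := (0:ℝ)))
    filter_upwards [hQ1] with n h1
    rw [fA0_zero h1]
  | j+1 =>
    have hP := choose_div_pow_tendsto hu hPlim (j+1)
    have hQ := choose_div_pow_tendsto hv hQlim j
    have h2 := (hP.mul hQ).const_mul ((-1:ℝ)^(j+1) * m^(2*(j+1)))
    have heq : (fun n : ℕ => ((-1:ℝ)^(j+1) * m^(2*(j+1))) *
        ((Nat.choose (P n - 1) (j+1) : ℝ)/(n:ℝ)^(j+1) * ((Nat.choose (Q n - 1) j : ℝ)/(n:ℝ)^j)))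
        =ᶠ[atTop] (fun n => fA0 m P Q n (j+1)) := by
      filter_upwards [hP1, hQ1, eventually_ge_atTop 1] with n h1 h3 h4
      rw [fA0_eq h4 h1 h3 j]
      ring
    have h5 := Filter.Tendsto.congr' heq h2
    convert h5 using 2
    show gA0 m u v (j+1) = _
    unfold gA0
    ring

lemma fB0_bound {m u v : ℝ} (hm : 0 ≤ m) {P Q : ℕ → ℕ} {n : ℕ} (hn : 1 ≤ n)
    (hP1 : 1 ≤ P n) (hQ1 : 1 ≤ Q n)
    (hPn : ((P n : ℕ) : ℝ) ≤ n * u) (hQn : ((Q n : ℕ) : ℝ) ≤ n * v) (k : ℕ) :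
    |fB0 m P Q n k| ≤ m * ((m^2*u*v)^k / (Nat.factorial k : ℝ)) := by
  have hn' : (0:ℝ) < n := by positivity
  have hu : 0 ≤ u := by nlinarith [(show (1:ℝ) ≤ (P n:ℝ) from by exact_mod_cast hP1)]
  have hv : 0 ≤ v := by nlinarith [(show (1:ℝ) ≤ (Q n:ℝ) from by exact_mod_cast hQ1)]
  have hP' : (Nat.choose (P n - 1) k : ℝ)/(n:ℝ)^k ≤ u^k/(Nat.factorial k : ℝ) := by
    apply choose_div_le hn ?_ k
    calc ((P n - 1 : ℕ):ℝ) ≤ (P n : ℝ) := by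
          have : (P n - 1 : ℕ) ≤ P n := by omega
          exact_mod_cast this
      _ ≤ n * u := hPn
  have hQ' : (Nat.choose (Q n - 1) k : ℝ)/(n:ℝ)^k ≤ v^k/(Nat.factorial k : ℝ) := by
    apply choose_div_le hn ?_ k
    calc ((Q n - 1 : ℕ):ℝ) ≤ (Q n : ℝ) := by
          have : (Q n - 1 : ℕ) ≤ Q n := by omega
          exact_mod_cast this
      _ ≤ n * v := hQn
  have hmp : (0:ℝ) ≤ m^(2*k+1) := pow_nonneg hm _
  have hq1 : (0:ℝ) ≤ (Nat.choose (P n - 1) k : ℝ)/(n:ℝ)^k := by positivity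
  have hq2 : (0:ℝ) ≤ (Nat.choose (Q n - 1) k : ℝ)/(n:ℝ)^k := by positivity
  rw [fB0_eq hn hP1 hQ1 k, abs_mul, abs_mul, abs_mul]
  have habs : |(-1:ℝ)^k| = 1 := by rw [abs_pow]; simp
  rw [habs, one_mul, abs_of_nonneg hmp, abs_of_nonneg hq1, abs_of_nonneg hq2]
  have hfact : (0:ℝ) < (Nat.factorial k : ℝ) := by positivity
  have hfact1 : (1:ℝ) ≤ (Nat.factorial k : ℝ) := Nat.one_le_cast.mpr k.factorial_pos
  have step1 : m^(2*k+1) * ((Nat.choose (P n - 1) k : ℝ)/(n:ℝ)^k)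
      * ((Nat.choose (Q n - 1) k : ℝ)/(n:ℝ)^k)
      ≤ m^(2*k+1) * (u^k/(Nat.factorial k : ℝ)) * (v^k/(Nat.factorial k : ℝ)) := by
    apply mul_le_mul (mul_le_mul le_rfl hP' hq1 hmp) hQ' hq2
    exact mul_nonneg hmp (by positivity)
  refine le_trans step1 ?_
  have hrw : m^(2*k+1) = m * (m^2)^k := by
    rw [pow_succ, pow_mul, mul_comm]
  calc m^(2*k+1) * (u^k/(Nat.factorial k : ℝ)) * (v^k/(Nat.factorial k : ℝ))
      = (m * ((m^2)^k * u^k * v^k)) / ((Nat.factorial k : ℝ) * (Nat.factorial k : ℝ)) := by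
        rw [hrw]; ring
    _ ≤ (m * ((m^2)^k * u^k * v^k)) / (Nat.factorial k : ℝ) := by
        apply div_le_div_of_nonneg_left ?_ hfact ?_
        · positivity
        · nlinarith
    _ = m * ((m^2*u*v)^k / (Nat.factorial k : ℝ)) := by
        rw [mul_pow, mul_pow]
        ring

lemma fA0_bound {m u v : ℝ} (hm : 0 ≤ m) {P Q : ℕ → ℕ} {n : ℕ} (hn : 1 ≤ n)
    (hP1 : 1 ≤ P n) (hQ1 : 1 ≤ Q n)
    (hPn : ((P n : ℕ) : ℝ) ≤ n * u) (hQn : ((Q n : ℕ) : ℝ) ≤ n * v) (k : ℕ) :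
    |fA0 m P Q n k| ≤ boundA0 m u v k := by
  have hn' : (0:ℝ) < n := by positivity
  have hu : 0 ≤ u := by nlinarith [(show (1:ℝ) ≤ (P n:ℝ) from by exact_mod_cast hP1)]
  have hv : 0 ≤ v := by nlinarith [(show (1:ℝ) ≤ (Q n:ℝ) from by exact_mod_cast hQ1)]
  match k with
  | 0 =>
    rw [fA0_zero hQ1]
    simp [boundA0]
  | j+1 =>
    have hP' : (Nat.choose (P n - 1) (j+1) : ℝ)/(n:ℝ)^(j+1)
        ≤ u^(j+1)/(Nat.factorial (j+1) : ℝ) := by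
      apply choose_div_le hn ?_ (j+1)
      calc ((P n - 1 : ℕ):ℝ) ≤ (P n : ℝ) := by
            have : (P n - 1 : ℕ) ≤ P n := by omega
            exact_mod_cast this
        _ ≤ n * u := hPn
    have hQ' : (Nat.choose (Q n - 1) j : ℝ)/(n:ℝ)^j ≤ v^j/(Nat.factorial j : ℝ) := by
      apply choose_div_le hn ?_ j
      calc ((Q n - 1 : ℕ):ℝ) ≤ (Q n : ℝ) := by
            have : (Q n - 1 : ℕ) ≤ Q n := by omega
            exact_mod_cast this
        _ ≤ n * v := hQn
    have hmp : (0:ℝ) ≤ m^(2*(j+1)) := pow_nonneg hm _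
    have hq1 : (0:ℝ) ≤ (Nat.choose (P n - 1) (j+1) : ℝ)/(n:ℝ)^(j+1) := by positivity
    have hq2 : (0:ℝ) ≤ (Nat.choose (Q n - 1) j : ℝ)/(n:ℝ)^j := by positivity
    rw [fA0_eq hn hP1 hQ1 j, abs_mul, abs_mul, abs_mul]
    have habs : |(-1:ℝ)^(j+1)| = 1 := by rw [abs_pow]; simp
    rw [habs, one_mul, abs_of_nonneg hmp, abs_of_nonneg hq1, abs_of_nonneg hq2]
    have hfj : (0:ℝ) < (Nat.factorial j : ℝ) := by positivity
    have hfj1 : (1:ℝ) ≤ (Nat.factorial (j+1) : ℝ) := Nat.one_le_cast.mpr (j+1).factorial_pos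
    have step1 : m^(2*(j+1)) * ((Nat.choose (P n - 1) (j+1) : ℝ)/(n:ℝ)^(j+1))
        * ((Nat.choose (Q n - 1) j : ℝ)/(n:ℝ)^j)
        ≤ m^(2*(j+1)) * (u^(j+1)/(Nat.factorial (j+1) : ℝ)) * (v^j/(Nat.factorial j : ℝ)) := by
      apply mul_le_mul (mul_le_mul le_rfl hP' hq1 hmp) hQ' hq2
      exact mul_nonneg hmp (by positivity)
    refine le_trans step1 ?_
    show _ ≤ (m^2*u) * ((m^2*u*v)^j / (Nat.factorial j : ℝ))
    have hrw : m^(2*(j+1)) = m^2 * (m^2)^j := by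
      rw [show 2*(j+1) = 2*j+2 by ring, pow_add, pow_mul]
      ring
    calc m^(2*(j+1)) * (u^(j+1)/(Nat.factorial (j+1) : ℝ)) * (v^j/(Nat.factorial j : ℝ))
        = (m^2 * u * ((m^2)^j * u^j * v^j)) /
            ((Nat.factorial (j+1) : ℝ) * (Nat.factorial j : ℝ)) := by
          rw [hrw, pow_succ]; ring
      _ ≤ (m^2 * u * ((m^2)^j * u^j * v^j)) / (Nat.factorial j : ℝ) := by
          apply div_le_div_of_nonneg_left ?_ hfj ?_
          · positivity
          · nlinarith
      _ = (m^2*u) * ((m^2*u*v)^j / (Nat.factorial j : ℝ)) := by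
          rw [mul_pow, mul_pow]
          ring

lemma summable_boundA0 (m u v : ℝ) : Summable (boundA0 m u v) := by
  rw [← summable_nat_add_iff 1]
  have : (fun j => boundA0 m u v (j+1))
      = (fun j => (m^2*u) * ((m^2*u*v)^j / (Nat.factorial j : ℝ))) := rfl
  rw [this]
  exact (Real.summable_pow_div_factorial _).mul_left _

lemma tsum_gB_eq (m x t : ℝ) (h : x^2 < t^2) :
    ∑' k, gB0 m ((t+x)/2) ((t-x)/2) k = m * besselJ0 (m * Real.sqrt (t^2 - x^2)) := by
  unfold besselJ0
  rw [← tsum_mul_left]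
  apply tsum_congr
  intro k
  have hρ2 : (Real.sqrt (t^2-x^2))^2 = t^2 - x^2 := Real.sq_sqrt (by linarith)
  unfold gB0
  rw [pow_mul]
  have hsq : (m * Real.sqrt (t^2-x^2) / 2)^2 = m^2*((t+x)/2)*((t-x)/2) := by
    rw [div_pow, mul_pow, hρ2]
    ring
  rw [hsq, mul_pow, mul_pow]
  have hrw : m^(2*k+1) = m * (m^2)^k := by rw [pow_succ, pow_mul, mul_comm]
  rw [hrw]
  have hfact : ((Nat.factorial k : ℝ)) ≠ 0 := by positivity
  field_simp

lemma tsum_gA_eq (m x t : ℝ) (h : x^2 < t^2) (ht : 0 < t)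
    (hsum : Summable (gA0 m ((t+x)/2) ((t-x)/2))) :
    ∑' k, gA0 m ((t+x)/2) ((t-x)/2) k
      = -m * ((x+t)/Real.sqrt (t^2 - x^2)) * besselJ1 (m * Real.sqrt (t^2 - x^2)) := by
  rw [hsum.tsum_eq_zero_add]
  have h0 : gA0 m ((t+x)/2) ((t-x)/2) 0 = 0 := rfl
  rw [h0, zero_add]
  unfold besselJ1
  rw [← tsum_mul_left]
  apply tsum_congr
  intro j
  have hpos : 0 < t^2 - x^2 := by linarith
  have hρpos : 0 < Real.sqrt (t^2-x^2) := Real.sqrt_pos.mpr hpos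
  have hρ2 : (Real.sqrt (t^2-x^2))^2 = t^2 - x^2 := Real.sq_sqrt (by linarith)
  show (-1)^(j+1) * m^(2*(j+1)) * (((t+x)/2)^(j+1) / (Nat.factorial (j+1) : ℝ))
      * (((t-x)/2)^j / (Nat.factorial j : ℝ)) = _
  rw [pow_succ (m * Real.sqrt (t^2-x^2) / 2) (2*j), pow_mul (m * Real.sqrt (t^2-x^2) / 2) 2 j]
  have hsq : (m * Real.sqrt (t^2-x^2) / 2)^2 = m^2*((t+x)/2)*((t-x)/2) := by
    rw [div_pow, mul_pow, hρ2]
    ring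
  rw [hsq, mul_pow, mul_pow]
  have hrw : m^(2*(j+1)) = m^2 * (m^2)^j := by
    rw [show 2*(j+1) = 2*j+2 by ring, pow_add, pow_mul]
    ring
  rw [hrw]
  have hfact : ((Nat.factorial j : ℝ)) ≠ 0 := by positivity
  have hfact2 : ((Nat.factorial (j+1) : ℝ)) ≠ 0 := by positivity
  have hρne : Real.sqrt (t^2-x^2) ≠ 0 := ne_of_gt hρpos
  rw [show ((t+x)/2)^(j+1) = ((t+x)/2)^j * ((t+x)/2) from pow_succ _ _]
  field_simp
  ring_nf

lemma am_eval (m ε : ℝ) (P Q : ℕ) (h1 : 1 ≤ P + Q) :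
    am ((P:ℤ) - Q) ((P + Q : ℕ) : ℤ) m ε
      = Complex.ofReal ((1 + m^2*ε^2) ^ ((1 - ((P+Q:ℕ):ℝ))/2)) *
        (Complex.ofReal (RB m ε P Q) + Complex.I * Complex.ofReal (RA m ε P Q)) := by
  unfold am
  have htoNat : ((P + Q : ℕ) : ℤ).toNat = (P + Q - 1) + 1 := by
    rw [Int.toNat_natCast]
    omega
  rw [htoNat, sum_pathsTo_closed _ (P+Q-1) P Q (by omega)]
  set z : ℂ := -Complex.I * ((m:ℝ) * (ε:ℝ) : ℂ) with hz
  have hz2 : z^2 = Complex.ofReal (-((m*ε)^2)) := by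
    rw [hz]
    push_cast
    ring_nf
    rw [Complex.I_sq]
    ring
  have hFF : FF z P Q = Complex.ofReal (RA m ε P Q) := by
    unfold FF RA
    rw [Complex.ofReal_sum]
    apply Finset.sum_congr rfl
    intro k _
    rw [pow_mul, hz2]
    push_cast
    ring
  have hGG : GG z P Q = -Complex.I * Complex.ofReal (RB m ε P Q) := by
    unfold GG RB
    rw [Complex.ofReal_sum, Finset.mul_sum]
    apply Finset.sum_congr rfl
    intro k _
    rw [pow_succ, pow_mul, hz2, hz]
    push_cast
    ring
  have hpref : ((1:ℂ) + (m:ℝ)^2 * (ε:ℝ)^2) ^ ((1 - (((P + Q : ℕ) : ℤ):ℂ)) / 2)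
      = Complex.ofReal ((1 + m^2*ε^2) ^ ((1 - ((P+Q:ℕ):ℝ))/2)) := by
    rw [Complex.ofReal_cpow (by positivity) _]
    push_cast
    ring_nf
  rw [hFF, hGG, hpref]
  ring_nf
  rw [Complex.I_sq]
  ring

lemma am_re_im (m ε : ℝ) (P Q : ℕ) (h1 : 1 ≤ P + Q) :
    (am ((P:ℤ) - Q) ((P + Q : ℕ) : ℤ) m ε).re
        = (1 + m^2*ε^2) ^ ((1 - ((P+Q:ℕ):ℝ))/2) * RB m ε P Q
    ∧ (am ((P:ℤ) - Q) ((P + Q : ℕ) : ℤ) m ε).im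
        = (1 + m^2*ε^2) ^ ((1 - ((P+Q:ℕ):ℝ))/2) * RA m ε P Q := by
  rw [am_eval m ε P Q h1]
  constructor <;> simp [Complex.ext_iff, Complex.mul_re, Complex.mul_im]

set_option maxHeartbeats 1000000

/-- Pointwise continuum limit of Feynman checkers. -/
theorem pointwise_continuum_limit (m : ℝ) (hm : 0 ≤ m) (x t : ℝ) (hx : |x| < t) :
    Filter.Tendsto (fun n : ℕ =>
        (n : ℝ) * (am (2 * ⌊(n : ℝ) * x / 2⌋) (2 * ⌊(n : ℝ) * t / 2⌋) m (1 / n)).re)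
      Filter.atTop (nhds (m * besselJ0 (m * Real.sqrt (t ^ 2 - x ^ 2)))) ∧
    Filter.Tendsto (fun n : ℕ =>
        (n : ℝ) * (am (2 * ⌊(n : ℝ) * x / 2⌋) (2 * ⌊(n : ℝ) * t / 2⌋) m (1 / n)).im)
      Filter.atTop
      (nhds (-m * ((x + t) / Real.sqrt (t ^ 2 - x ^ 2)) *
        besselJ1 (m * Real.sqrt (t ^ 2 - x ^ 2)))) := by
  obtain ⟨hx1, hx2⟩ := abs_lt.mp hx
  have ht : 0 < t := lt_of_le_of_lt (abs_nonneg x) hx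
  have hu : (0:ℝ) < (t+x)/2 := by linarith
  have hv : (0:ℝ) < (t-x)/2 := by linarith
  have hsq : x^2 < t^2 := by nlinarith
  set Pf : ℕ → ℕ := fun n => (⌊(n:ℝ)*t/2⌋ + ⌊(n:ℝ)*x/2⌋).toNat with hPfdef
  set Qf : ℕ → ℕ := fun n => (⌊(n:ℝ)*t/2⌋ - ⌊(n:ℝ)*x/2⌋).toNat with hQfdef
  have hgood : ∀ᶠ n : ℕ in Filter.atTop,
      (1:ℤ) ≤ ⌊(n:ℝ)*t/2⌋ + ⌊(n:ℝ)*x/2⌋ ∧ (1:ℤ) ≤ ⌊(n:ℝ)*t/2⌋ - ⌊(n:ℝ)*x/2⌋ ∧ 1 ≤ n := by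
    have h2 := (tendsto_natCast_atTop_atTop (R := ℝ)).eventually_ge_atTop (6/(t+x))
    have h3 := (tendsto_natCast_atTop_atTop (R := ℝ)).eventually_ge_atTop (6/(t-x))
    filter_upwards [h2, h3, Filter.eventually_ge_atTop 1] with n hn2 hn3 hn1
    have fb1 : (n:ℝ)*t/2 - 1 < ((⌊(n:ℝ)*t/2⌋:ℤ):ℝ) := Int.sub_one_lt_floor _
    have fb2 : (n:ℝ)*x/2 - 1 < ((⌊(n:ℝ)*x/2⌋:ℤ):ℝ) := Int.sub_one_lt_floor _
    have fb1' : ((⌊(n:ℝ)*t/2⌋:ℤ):ℝ) ≤ (n:ℝ)*t/2 := Int.floor_le _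
    have fb2' : ((⌊(n:ℝ)*x/2⌋:ℤ):ℝ) ≤ (n:ℝ)*x/2 := Int.floor_le _
    rw [div_le_iff₀ (by linarith : (0:ℝ) < t+x)] at hn2
    rw [div_le_iff₀ (by linarith : (0:ℝ) < t-x)] at hn3
    refine ⟨?_, ?_, hn1⟩
    · have hr : (0:ℝ) < ((⌊(n:ℝ)*t/2⌋ + ⌊(n:ℝ)*x/2⌋ : ℤ):ℝ) := by push_cast; nlinarith
      have := Int.cast_pos.mp hr
      omega
    · have hr : (0:ℝ) < ((⌊(n:ℝ)*t/2⌋ - ⌊(n:ℝ)*x/2⌋ : ℤ):ℝ) := by push_cast; nlinarith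
      have := Int.cast_pos.mp hr
      omega
  have hfacts : ∀ᶠ n : ℕ in Filter.atTop,
      1 ≤ n ∧ 1 ≤ Pf n ∧ 1 ≤ Qf n ∧
      (2 * ⌊(n:ℝ)*x/2⌋ = (Pf n : ℤ) - (Qf n : ℤ)) ∧
      (((Pf n + Qf n : ℕ) : ℤ) = 2 * ⌊(n:ℝ)*t/2⌋) ∧
      ((Pf n : ℝ) ≤ n * ((t+x)/2)) ∧
      ((Qf n : ℝ) ≤ n * ((t-x)/2 + 1)) ∧
      (((Pf n + Qf n : ℕ) : ℝ) ≤ n * t) ∧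
      ((Pf n : ℝ) = ((⌊(n:ℝ)*t/2⌋:ℤ):ℝ) + ((⌊(n:ℝ)*x/2⌋:ℤ):ℝ)) ∧
      ((Qf n : ℝ) = ((⌊(n:ℝ)*t/2⌋:ℤ):ℝ) - ((⌊(n:ℝ)*x/2⌋:ℤ):ℝ)) := by
    filter_upwards [hgood] with n hg
    obtain ⟨g1, g2, g3⟩ := hg
    have hPZ : (Pf n : ℤ) = ⌊(n:ℝ)*t/2⌋ + ⌊(n:ℝ)*x/2⌋ := Int.toNat_of_nonneg (by omega)
    have hQZ : (Qf n : ℤ) = ⌊(n:ℝ)*t/2⌋ - ⌊(n:ℝ)*x/2⌋ := Int.toNat_of_nonneg (by omega)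
    have hPR : (Pf n : ℝ) = ((⌊(n:ℝ)*t/2⌋:ℤ):ℝ) + ((⌊(n:ℝ)*x/2⌋:ℤ):ℝ) := by
      have := congrArg (fun z : ℤ => (z:ℝ)) hPZ
      push_cast at this
      exact this
    have hQR : (Qf n : ℝ) = ((⌊(n:ℝ)*t/2⌋:ℤ):ℝ) - ((⌊(n:ℝ)*x/2⌋:ℤ):ℝ) := by
      have := congrArg (fun z : ℤ => (z:ℝ)) hQZ
      push_cast at this
      exact this
    have fb1 : (n:ℝ)*t/2 - 1 < ((⌊(n:ℝ)*t/2⌋:ℤ):ℝ) := Int.sub_one_lt_floor _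
    have fb2 : (n:ℝ)*x/2 - 1 < ((⌊(n:ℝ)*x/2⌋:ℤ):ℝ) := Int.sub_one_lt_floor _
    have fb1' : ((⌊(n:ℝ)*t/2⌋:ℤ):ℝ) ≤ (n:ℝ)*t/2 := Int.floor_le _
    have fb2' : ((⌊(n:ℝ)*x/2⌋:ℤ):ℝ) ≤ (n:ℝ)*x/2 := Int.floor_le _
    have hn1 : (1:ℝ) ≤ n := by exact_mod_cast g3
    have hPQR : ((Pf n + Qf n : ℕ) : ℝ) = (Pf n : ℝ) + (Qf n : ℝ) := by push_cast; ring
    refine ⟨g3, by omega, by omega, by omega, by push_cast; omega, ?_, ?_, ?_, hPR, hQR⟩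
    · rw [hPR]; linarith
    · rw [hQR]; nlinarith
    · rw [hPQR, hPR, hQR]; linarith
  have hPev : ∀ᶠ n : ℕ in Filter.atTop, 1 ≤ Pf n := hfacts.mono (fun n h => h.2.1)
  have hQev : ∀ᶠ n : ℕ in Filter.atTop, 1 ≤ Qf n := hfacts.mono (fun n h => h.2.2.1)
  have h1n : Filter.Tendsto (fun n : ℕ => 1/(n:ℝ)) Filter.atTop (nhds 0) :=
    tendsto_one_div_atTop_nhds_zero_nat
  have hPlim : Filter.Tendsto (fun n : ℕ => (Pf n : ℝ)/n) Filter.atTop (nhds ((t+x)/2)) := by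
    have h1 := (floor_mul_div_tendsto t).add (floor_mul_div_tendsto x)
    have h1' : Filter.Tendsto (fun n : ℕ =>
        ((⌊(n:ℝ)*t/2⌋:ℤ):ℝ)/n + ((⌊(n:ℝ)*x/2⌋:ℤ):ℝ)/n) Filter.atTop (nhds ((t+x)/2)) := by
      convert h1 using 2
      ring
    apply Filter.Tendsto.congr' ?_ h1'
    filter_upwards [hfacts] with n hf
    rw [← add_div, ← hf.2.2.2.2.2.2.2.2.1]
  have hQlim : Filter.Tendsto (fun n : ℕ => (Qf n : ℝ)/n) Filter.atTop (nhds ((t-x)/2)) := by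
    have h1 := (floor_mul_div_tendsto t).sub (floor_mul_div_tendsto x)
    have h1' : Filter.Tendsto (fun n : ℕ =>
        ((⌊(n:ℝ)*t/2⌋:ℤ):ℝ)/n - ((⌊(n:ℝ)*x/2⌋:ℤ):ℝ)/n) Filter.atTop (nhds ((t-x)/2)) := by
      convert h1 using 2
      ring
    apply Filter.Tendsto.congr' ?_ h1'
    filter_upwards [hfacts] with n hf
    rw [div_sub_div_same, ← hf.2.2.2.2.2.2.2.2.2]
  have hP1lim : Filter.Tendsto (fun n : ℕ => ((Pf n - 1 : ℕ) : ℝ)/n) Filter.atTop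
      (nhds ((t+x)/2)) := by
    apply Filter.Tendsto.congr' ?_ (by simpa using hPlim.sub h1n)
    filter_upwards [hfacts] with n hf
    rw [Nat.cast_sub hf.2.1, sub_div]
    norm_num
  have hQ1lim : Filter.Tendsto (fun n : ℕ => ((Qf n - 1 : ℕ) : ℝ)/n) Filter.atTop
      (nhds ((t-x)/2)) := by
    apply Filter.Tendsto.congr' ?_ (by simpa using hQlim.sub h1n)
    filter_upwards [hfacts] with n hf
    rw [Nat.cast_sub hf.2.2.1, sub_div]
    norm_num
  -- dominated convergence, real part
  have hfBlim := fB0_tendsto (m := m) hu hv hPev hQev hP1lim hQ1lim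
  have hboundB : ∀ᶠ n : ℕ in Filter.atTop, ∀ k, ‖fB0 m Pf Qf n k‖
      ≤ m * ((m^2*((t+x)/2)*((t-x)/2+1))^k / (Nat.factorial k : ℝ)) := by
    filter_upwards [hfacts] with n hf k
    rw [Real.norm_eq_abs]
    exact fB0_bound hm hf.1 hf.2.1 hf.2.2.1 hf.2.2.2.2.2.1 hf.2.2.2.2.2.2.1 k
  have hsummB : Summable (fun k =>
      m * ((m^2*((t+x)/2)*((t-x)/2+1))^k / (Nat.factorial k : ℝ))) :=
    (Real.summable_pow_div_factorial _).mul_left m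
  have htsumB := tendsto_tsum_of_dominated_convergence hsummB hfBlim hboundB
  rw [tsum_gB_eq m x t hsq] at htsumB
  -- dominated convergence, imaginary part
  have hfAlim := fA0_tendsto (m := m) hu hv hPev hQev hP1lim hQ1lim
  have hboundA : ∀ᶠ n : ℕ in Filter.atTop, ∀ k, ‖fA0 m Pf Qf n k‖
      ≤ boundA0 m ((t+x)/2) ((t-x)/2+1) k := by
    filter_upwards [hfacts] with n hf k
    rw [Real.norm_eq_abs]
    exact fA0_bound hm hf.1 hf.2.1 hf.2.2.1 hf.2.2.2.2.2.1 hf.2.2.2.2.2.2.1 k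
  have hsummA : Summable (boundA0 m ((t+x)/2) ((t-x)/2+1)) := summable_boundA0 _ _ _
  have htsumA := tendsto_tsum_of_dominated_convergence hsummA hfAlim hboundA
  have hgAle : ∀ k, ‖gA0 m ((t+x)/2) ((t-x)/2) k‖ ≤ boundA0 m ((t+x)/2) ((t-x)/2+1) k := by
    intro k
    apply le_of_tendsto (tendsto_norm.comp (hfAlim k))
    exact hboundA.mono (fun n h => h k)
  have hgAsum : Summable (gA0 m ((t+x)/2) ((t-x)/2)) :=
    Summable.of_norm_bounded hsummA hgAle
  rw [tsum_gA_eq m x t hsq ht hgAsum] at htsumA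
  -- prefactor
  have hpref := pref_tendsto m (fun n => (1 - ((Pf n + Qf n : ℕ):ℝ))/2) (t+1) (by
    filter_upwards [hfacts] with n hf
    have hn1 : (1:ℝ) ≤ n := by exact_mod_cast hf.1
    have hs1 : (2:ℝ) ≤ ((Pf n + Qf n : ℕ):ℝ) := by
      exact_mod_cast (show 2 ≤ Pf n + Qf n by
        have := hf.2.1
        have := hf.2.2.1
        omega)
    have hs2 : ((Pf n + Qf n : ℕ):ℝ) ≤ n * t := hf.2.2.2.2.2.2.2.1
    rw [abs_le]
    constructor <;> nlinarith)
  -- eventual identification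
  have hev : ∀ᶠ n : ℕ in Filter.atTop,
      ((1 + m^2*(1/(n:ℝ))^2) ^ ((1 - ((Pf n + Qf n : ℕ):ℝ))/2) * (∑' k, fB0 m Pf Qf n k)
        = (n:ℝ) * (am (2 * ⌊(n:ℝ) * x / 2⌋) (2 * ⌊(n:ℝ) * t / 2⌋) m (1/(n:ℝ))).re)
      ∧ ((1 + m^2*(1/(n:ℝ))^2) ^ ((1 - ((Pf n + Qf n : ℕ):ℝ))/2) * (∑' k, fA0 m Pf Qf n k)
        = (n:ℝ) * (am (2 * ⌊(n:ℝ) * x / 2⌋) (2 * ⌊(n:ℝ) * t / 2⌋) m (1/(n:ℝ))).im) := by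
    filter_upwards [hfacts] with n hf
    obtain ⟨f1, f2, f3, f4, f5, f6, f7, f8, f9, f10⟩ := hf
    have harg : am (2 * ⌊(n:ℝ) * x / 2⌋) (2 * ⌊(n:ℝ) * t / 2⌋) m (1/(n:ℝ))
        = am ((Pf n : ℤ) - (Qf n : ℤ)) ((Pf n + Qf n : ℕ) : ℤ) m (1/(n:ℝ)) := by
      rw [f4, ← f5]
    obtain ⟨hre, him⟩ := am_re_im m (1/(n:ℝ)) (Pf n) (Qf n) (le_trans f2 (Nat.le_add_right _ _))
    have hzB : ∀ k ∉ Finset.range (Qf n + 1), fB0 m Pf Qf n k = 0 := by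
      intro k hk
      simp only [Finset.mem_range, not_lt] at hk
      unfold fB0
      rw [cc_eq_zero (show Qf n < k+1 by omega)]
      simp
    have hzA : ∀ k ∉ Finset.range (Qf n + 1), fA0 m Pf Qf n k = 0 := by
      intro k hk
      simp only [Finset.mem_range, not_lt] at hk
      unfold fA0
      rw [cc_eq_zero (show Qf n < k by omega)]
      simp
    have htsB : ∑' k, fB0 m Pf Qf n k = (n:ℝ) * RB m (1/(n:ℝ)) (Pf n) (Qf n) := by
      rw [tsum_eq_sum hzB]
      unfold RB
      rw [Finset.mul_sum]
      apply Finset.sum_congr rfl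
      intro k _
      unfold fB0
      ring
    have htsA : ∑' k, fA0 m Pf Qf n k = (n:ℝ) * RA m (1/(n:ℝ)) (Pf n) (Qf n) := by
      rw [tsum_eq_sum hzA]
      unfold RA
      rw [Finset.mul_sum]
      apply Finset.sum_congr rfl
      intro k _
      unfold fA0
      ring
    constructor
    · rw [harg, hre, htsB]
      ring
    · rw [harg, him, htsA]
      ring
  constructor
  · have hmul := hpref.mul htsumB
    rw [one_mul] at hmul
    exact Filter.Tendsto.congr' (hev.mono (fun n h => h.1)) hmul
  · have hmul := hpref.mul htsumA
    rw [one_mul] at hmul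
    exact Filter.Tendsto.congr' (hev.mono (fun n h => h.2)) hmul
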